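/- For positive integers k1 < k2, the supremum of the set D_odd = { −1/2^{b1} + 1/2^{b1+b2} − 1/2^{b1+b2+b3} + ... : b_i ∈ {k1, k2} } equals (1 − 2^{k1})/(2^{k1+k2} − 1), and its infimum equals (1 − 2^{k2})/(2^{k1+k2} − 1); hence its diameter is (2^{k2} − 2^{k1})/(2^{k1+k2} − 1). -/

import Mathlib

open Filter Topology

/-- Partial sum `a 0 + ... + a n` of a digit sequence. -/
noncomputable def psum (a : ℕ → ℕ) (n : ℕ) : ℕ := ∑ i ∈ Finset.range (n + 1), a i

/-- Value of the alternating series `Σ_{n≥1} 2(-1)^{n-1}/2^{a1+...+an}`. -/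
noncomputable def val (a : ℕ → ℕ) : ℝ := ∑' n : ℕ, (2 * (-1 : ℝ) ^ n) / 2 ^ (psum a n)

/-- The set `Δ0` of all values of the alternating series over `K`-valued digit sequences. -/
noncomputable def Delta0 (K : Set ℕ) : Set ℝ :=
  { y | ∃ a : ℕ → ℕ, (∀ i, a i ∈ K) ∧ y = val a }

/-- Value of the series over m ≥ 1 of (-1)^m / 2^(b1+...+bm). -/
noncomputable def valOdd (b : ℕ → ℕ) : ℝ := ∑' m : ℕ, (-1 : ℝ) ^ (m + 1) / 2 ^ (psum b m)

noncomputable def Dodd (K : Set ℕ) : Set ℝ :=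
  { y | ∃ b : ℕ → ℕ, (∀ i, b i ∈ K) ∧ y = valOdd b }


lemma psum_ge (b : ℕ → ℕ) (hb : ∀ i, 1 ≤ b i) (m : ℕ) : m + 1 ≤ psum b m := by
  calc m + 1 = ∑ i ∈ Finset.range (m+1), 1 := by simp
  _ ≤ psum b m := Finset.sum_le_sum fun i _ => hb i

lemma summable_odd (b : ℕ → ℕ) (hb : ∀ i, 1 ≤ b i) :
    Summable (fun m : ℕ => (-1 : ℝ) ^ (m + 1) / 2 ^ (psum b m)) := by
  apply Summable.of_norm_bounded (g := fun m : ℕ => (1/2 : ℝ) ^ m)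
    (summable_geometric_of_lt_one (by norm_num) (by norm_num))
  intro m
  have h1 : ‖(-1 : ℝ) ^ (m + 1) / 2 ^ (psum b m)‖ = (1/2 : ℝ) ^ (psum b m) := by
    rw [norm_div, norm_pow, norm_pow]
    simp [one_div, inv_pow]
  rw [h1]
  exact pow_le_pow_of_le_one (by norm_num) (by norm_num) (le_trans (Nat.le_succ m) (psum_ge b hb m))

lemma abs_valOdd_le (b : ℕ → ℕ) (hb : ∀ i, 1 ≤ b i) : ‖valOdd b‖ ≤ 1 := by
  have := summable_odd b hb
  calc ‖valOdd b‖ ≤ ∑' m : ℕ, ‖(-1 : ℝ) ^ (m + 1) / 2 ^ (psum b m)‖ :=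
        norm_tsum_le_tsum_norm this.norm
  _ ≤ ∑' m : ℕ, (1/2 : ℝ) ^ (m+1) := by
      have hg : Summable (fun m : ℕ => (1/2 : ℝ) ^ (m+1)) :=
        (((summable_geometric_of_lt_one (r := (1/2:ℝ)) (by norm_num) (by norm_num)).mul_left (1/2:ℝ))).congr
          (by intro n; rw [pow_succ]; ring)
      refine Summable.tsum_le_tsum (fun m => ?_) this.norm hg
      have h1 : ‖(-1 : ℝ) ^ (m + 1) / 2 ^ (psum b m)‖ = (1/2 : ℝ) ^ (psum b m) := by
        rw [norm_div, norm_pow, norm_pow]; simp [one_div, inv_pow]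
      rw [h1]
      exact pow_le_pow_of_le_one (by norm_num) (by norm_num) (psum_ge b hb m)
  _ = 1 := by
      have : ∑' m : ℕ, (1/2 : ℝ) ^ (m+1) = (∑' m : ℕ, (1/2:ℝ)^m) * (1/2) := by
        simp_rw [pow_succ]; rw [tsum_mul_right]
      rw [this, tsum_geometric_of_lt_one (by norm_num) (by norm_num)]
      norm_num

lemma valOdd_rec (b : ℕ → ℕ) (hb : ∀ i, 1 ≤ b i) :
    valOdd b = -(1 + valOdd (fun n => b (n+1))) / 2 ^ (b 0) := by
  have hs := summable_odd b hb
  have key : ∀ m : ℕ, psum b (m+1) = psum (fun n => b (n+1)) m + b 0 := by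
    intro m
    unfold psum
    rw [Finset.sum_range_succ']
  rw [valOdd, Summable.tsum_eq_zero_add hs]
  have h0 : (-1 : ℝ) ^ (0 + 1) / 2 ^ (psum b 0) = -1 / 2 ^ (b 0) := by
    simp [psum]
  have h1 : ∀ m : ℕ, (-1 : ℝ) ^ (m + 1 + 1) / 2 ^ (psum b (m+1)) =
      (-1 / 2 ^ (b 0)) * ((-1 : ℝ) ^ (m + 1) / 2 ^ (psum (fun n => b (n+1)) m)) := by
    intro m
    rw [key m, pow_add, pow_succ]
    ring
  rw [h0, tsum_congr h1, tsum_mul_left]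
  show -1 / 2 ^ b 0 + -1 / 2 ^ b 0 * valOdd (fun n => b (n+1)) = _
  field_simp
  ring

section Main

lemma mem2_one_le {k1 k2 : ℕ} (hk1 : 0 < k1) (hk : k1 < k2) {b : ℕ → ℕ}
    (hb : ∀ i, b i ∈ ({k1, k2} : Set ℕ)) : ∀ i, 1 ≤ b i := by
  intro i
  have h := hb i
  simp only [Set.mem_insert_iff, Set.mem_singleton_iff] at h
  omega

theorem sup_inf_diam_Dodd (k1 k2 : ℕ) (hk1 : 0 < k1) (hk : k1 < k2) :
    sSup (Dodd {k1, k2}) = (1 - (2 : ℝ) ^ k1) / ((2 : ℝ) ^ (k1 + k2) - 1) ∧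
    sInf (Dodd {k1, k2}) = (1 - (2 : ℝ) ^ k2) / ((2 : ℝ) ^ (k1 + k2) - 1) ∧
    Metric.diam (Dodd {k1, k2}) =
      ((2 : ℝ) ^ k2 - (2 : ℝ) ^ k1) / ((2 : ℝ) ^ (k1 + k2) - 1) := by
  set A : ℝ := (2:ℝ) ^ k1 with hAdef
  set B : ℝ := (2:ℝ) ^ k2 with hBdef
  have hA1 : (2:ℝ) ≤ A := by
    calc (2:ℝ) = 2^1 := (pow_one 2).symm
    _ ≤ A := pow_le_pow_right₀ (by norm_num) hk1
  have hAB : A < B := pow_lt_pow_right₀ (by norm_num) hk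
  have hA0 : (0:ℝ) < A := by linarith
  have hB0 : (0:ℝ) < B := by linarith
  have hQ : (0:ℝ) < A * B - 1 := by nlinarith
  have hpow : (2:ℝ) ^ (k1 + k2) = A * B := pow_add 2 k1 k2
  set D := Dodd ({k1, k2} : Set ℕ) with hD
  -- basic facts about D
  have hIcc : D ⊆ Set.Icc (-1 : ℝ) 1 := by
    rintro y ⟨b, hb, rfl⟩
    have := abs_valOdd_le b (mem2_one_le hk1 hk hb)
    rw [Real.norm_eq_abs, abs_le] at this
    exact this
  have hbdd : Bornology.IsBounded D := (Metric.isBounded_Icc (-1:ℝ) 1).subset hIcc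
  have hBddA : BddAbove D := (bddAbove_Icc (a := (-1:ℝ)) (b := 1)).mono hIcc
  have hBddB : BddBelow D := (bddBelow_Icc : BddBelow (Set.Icc (-1:ℝ) 1)).mono hIcc
  -- extremal sequences
  set bU : ℕ → ℕ := fun n => if n % 2 = 0 then k2 else k1 with hbU
  set bL : ℕ → ℕ := fun n => bU (n + 1) with hbL
  have hbUK : ∀ i, bU i ∈ ({k1, k2} : Set ℕ) := by
    intro i; by_cases h : i % 2 = 0 <;> simp [hbU, h]
  have hbLK : ∀ i, bL i ∈ ({k1, k2} : Set ℕ) := fun i => hbUK (i + 1)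
  set u : ℝ := valOdd bU with hu
  set l : ℝ := valOdd bL with hl
  have huD : u ∈ D := ⟨bU, hbUK, rfl⟩
  have hlD : l ∈ D := ⟨bL, hbLK, rfl⟩
  have hne : D.Nonempty := ⟨u, huD⟩
  have hrecU : u = -(1 + l) / B := by
    have := valOdd_rec bU (mem2_one_le hk1 hk hbUK)
    simpa [hbU, hbL] using this
  have hrecL : l = -(1 + u) / A := by
    have h2 : (fun n => bL (n + 1)) = bU := by
      funext n
      have : (n + 1 + 1) % 2 = n % 2 := by omega
      simp [hbL, hbU, this]
    have := valOdd_rec bL (mem2_one_le hk1 hk hbLK)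
    rw [h2] at this
    simpa [hbL, hbU] using this
  have huB : u * B = -(1 + l) := by
    rw [hrecU]; field_simp
  have hlA : l * A = -(1 + u) := by
    rw [hrecL]; field_simp
  have huval : u = (1 - A) / (A * B - 1) := by
    rw [eq_div_iff (ne_of_gt hQ)]
    linear_combination A * huB - hlA
  have hlval : l = (1 - B) / (A * B - 1) := by
    rw [eq_div_iff (ne_of_gt hQ)]
    linear_combination B * hlA - huB
  -- sup and inf
  set s := sSup D with hs
  set i := sInf D with hi
  have h_us : u ≤ s := le_csSup hBddA huD
  have h_il : i ≤ l := csInf_le hBddB hlD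
  have h_i1 : (-1:ℝ) ≤ i := le_csInf hne fun y hy => (hIcc hy).1
  have h_s1 : s ≤ 1 := csSup_le hne fun y hy => (hIcc hy).2
  -- key recursive bounds
  have hub : ∀ y ∈ D, y ≤ -(1 + i) / B := by
    rintro y ⟨b, hbK, rfl⟩
    have hb1 := mem2_one_le hk1 hk hbK
    set w : ℝ := valOdd (fun n => b (n + 1)) with hw
    have hwD : w ∈ D := ⟨fun n => b (n + 1), fun j => hbK (j + 1), rfl⟩
    have hwi : i ≤ w := csInf_le hBddB hwD
    rw [valOdd_rec b hb1, ← hw]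
    set P : ℝ := (2:ℝ) ^ (b 0) with hP
    have hP0 : (0:ℝ) < P := by positivity
    have hPB : P ≤ B := by
      apply pow_le_pow_right₀ (by norm_num)
      have h := hbK 0
      simp only [Set.mem_insert_iff, Set.mem_singleton_iff] at h
      omega
    rw [div_le_div_iff₀ hP0 hB0]
    nlinarith [mul_nonneg (by linarith : (0:ℝ) ≤ 1 + i) (by linarith : (0:ℝ) ≤ B - P)]
  have hlb : ∀ y ∈ D, -(1 + s) / A ≤ y := by
    rintro y ⟨b, hbK, rfl⟩
    have hb1 := mem2_one_le hk1 hk hbK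
    set w : ℝ := valOdd (fun n => b (n + 1)) with hw
    have hwD : w ∈ D := ⟨fun n => b (n + 1), fun j => hbK (j + 1), rfl⟩
    have hws : w ≤ s := le_csSup hBddA hwD
    have hwm1 : (-1:ℝ) ≤ w := (hIcc hwD).1
    rw [valOdd_rec b hb1, ← hw]
    set P : ℝ := (2:ℝ) ^ (b 0) with hP
    have hP0 : (0:ℝ) < P := by positivity
    have hPA : A ≤ P := by
      apply pow_le_pow_right₀ (by norm_num)
      have h := hbK 0
      simp only [Set.mem_insert_iff, Set.mem_singleton_iff] at h
      omega
    rw [div_le_div_iff₀ hA0 hP0]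
    nlinarith [mul_nonneg (by linarith : (0:ℝ) ≤ 1 + s) (by linarith : (0:ℝ) ≤ P - A)]
  have hsle : s ≤ -(1 + i) / B := csSup_le hne hub
  have hile : -(1 + s) / A ≤ i := le_csInf hne hlb
  have hsB : s * B ≤ -(1 + i) := (le_div_iff₀ hB0).mp hsle
  have hiA : -(1 + s) ≤ i * A := (div_le_iff₀ hA0).mp hile
  have hsupval : s = (1 - A) / (A * B - 1) := by
    apply le_antisymm
    · rw [le_div_iff₀ hQ]
      nlinarith [mul_le_mul_of_nonneg_left hsB hA0.le]
    · rw [← huval]; exact h_us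
  have hinfval : i = (1 - B) / (A * B - 1) := by
    apply le_antisymm
    · rw [← hlval]; exact h_il
    · rw [div_le_iff₀ hQ]
      nlinarith [mul_le_mul_of_nonneg_left hiA hB0.le]
  refine ⟨by rw [hpow]; exact hsupval, by rw [hpow]; exact hinfval, ?_⟩
  rw [Real.diam_eq hbdd, ← hs, ← hi, hsupval, hinfval, hpow, div_sub_div_same]
  ring_nf
end Main
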